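/- Let L = inf{p_0·(p_i/p_0)^{1/i} : i ≥ 1, p_i > 0}. Then (p^min_k)^{1/k} → L as k → ∞ along the subsequence of k with π(𝒮_k) > 0. As a consequence, L < 1. -/

import Mathlib

open scoped BigOperators Classical Topology
open Filter

inductive PTree : Type
  | node : List PTree → PTree

namespace PTree

mutual
def size : PTree → ℕ
  | node ts => 1 + sizeList ts
def sizeList : List PTree → ℕ
  | [] => 0
  | t :: ts => size t + sizeList ts
end

mutual
def subtreesList : PTree → List PTree
  | node ts => node ts :: subtreesListAux ts
def subtreesListAux : List PTree → List PTree
  | [] => []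
  | t :: ts => subtreesList t ++ subtreesListAux ts
end

mutual
noncomputable def gwProb (p : ℕ → ℝ) : PTree → ℝ
  | node ts => p ts.length * gwProbList p ts
noncomputable def gwProbList (p : ℕ → ℝ) : List PTree → ℝ
  | [] => 1
  | t :: ts => gwProb p t * gwProbList p ts
end

mutual
noncomputable def gwProbNF (p : ℕ → ℝ) : PTree → ℝ
  | node [] => 1
  | node (t :: ts) => p (t :: ts).length * gwProbNFList p (t :: ts)
noncomputable def gwProbNFList (p : ℕ → ℝ) : List PTree → ℝ
  | [] => 1
  | t :: ts => gwProbNF p t * gwProbNFList p ts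
end

noncomputable def countFringe (T t : PTree) : ℕ :=
  ((subtreesList t).map (fun s => if s = T then 1 else 0)).sum

noncomputable def countFringeSet (S : Set PTree) (t : PTree) : ℕ :=
  ((subtreesList t).map (fun s => if s ∈ S then 1 else 0)).sum

inductive IsNFRoot : PTree → PTree → Prop
  | leaf (t : PTree) : IsNFRoot (node []) t
  | node {ts ts' : List PTree} (hne : ts ≠ []) (h : List.Forall₂ IsNFRoot ts ts') :
      IsNFRoot (node ts) (node ts')

noncomputable def countNonFringe (T t : PTree) : ℕ :=
  ((subtreesList t).map (fun s => if IsNFRoot T s then 1 else 0)).sum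

def completeRAry (r : ℕ) : ℕ → PTree
  | 0 => node []
  | h + 1 => node (List.replicate r (completeRAry r h))

end PTree

open PTree

/-- The offspring distribution condition: nonnegative probabilities summing to 1,
mean 1, and finite positive variance. -/
def OffspringCond (p : ℕ → ℝ) : Prop :=
  (∀ i, 0 ≤ p i) ∧ HasSum p 1 ∧ HasSum (fun i : ℕ => (i : ℝ) * p i) 1 ∧
    Summable (fun i : ℕ => (i : ℝ) ^ 2 * p i) ∧ 1 < ∑' i : ℕ, (i : ℝ) ^ 2 * p i

/-- `piSet p S = ∑_{T ∈ S} π(T)`. -/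
noncomputable def piSet (p : ℕ → ℝ) (S : Set PTree) : ℝ := ∑' T : S, gwProb p T.1

/-- Probability that the conditional Galton-Watson tree of size `n` satisfies `E`. -/
noncomputable def probGW (p : ℕ → ℝ) (n : ℕ) (E : PTree → Prop) : ℝ :=
  (∑' T : {T : PTree // size T = n ∧ E T}, gwProb p T.1) / piSet p {T | size T = n}

/-- Expectation of `f` under the conditional Galton-Watson tree of size `n`. -/
noncomputable def expGW (p : ℕ → ℝ) (n : ℕ) (f : PTree → ℝ) : ℝ :=
  (∑' T : {T : PTree // size T = n}, f T.1 * gwProb p T.1) / piSet p {T | size T = n}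

noncomputable def varGW (p : ℕ → ℝ) (n : ℕ) (f : PTree → ℝ) : ℝ :=
  expGW p n (fun T => (f T - expGW p n f) ^ 2)

/-- The filter "n → ∞ along the subsequence where `𝒯_n` is well-defined". -/
noncomputable def alongGW (p : ℕ → ℝ) : Filter ℕ :=
  Filter.atTop ⊓ Filter.principal {n | 0 < piSet p {T | size T = n}}

/-- Total variation distance between two (sub)probability mass functions on ℕ. -/
noncomputable def tvDist (f g : ℕ → ℝ) : ℝ :=
  ⨆ A : Set ℕ, |(∑' m : A, f m.1) - (∑' m : A, g m.1)|

/-- The Poisson probability mass function with mean `μ`. -/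
noncomputable def poissonPMF (μ : ℝ) (m : ℕ) : ℝ :=
  Real.exp (-μ) * μ ^ m / (m.factorial : ℝ)

/-- The standard normal cumulative distribution function. -/
noncomputable def stdNormalCDF (x : ℝ) : ℝ :=
  ∫ t in Set.Iic x, (Real.sqrt (2 * Real.pi))⁻¹ * Real.exp (-t ^ 2 / 2)

/-- `𝒯⁺_k`: all possible trees of size at most `k`. -/
def TPlus (p : ℕ → ℝ) (k : ℕ) : Set PTree := {T | size T ≤ k ∧ 0 < gwProb p T}

/-- `p^min_k`, the minimal probability of a possible tree of size at most `k`. -/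
noncomputable def pmin (p : ℕ → ℝ) (k : ℕ) : ℝ := sInf (gwProb p '' TPlus p k)

/-- `K_n(t)`: the maximal `k` such that every possible tree of size at most `k`
occurs as a fringe subtree of `t`. -/
noncomputable def maxAllFringe (p : ℕ → ℝ) (t : PTree) : ℕ :=
  sSup {k | ∀ T ∈ TPlus p k, T ∈ subtreesList t}

/-- `H_{n,r}(t)`: the maximal `h` such that every complete `r`-ary tree of height
at most `h` occurs as a fringe subtree of `t`. -/
noncomputable def maxRAryHeight (r : ℕ) (t : PTree) : ℕ :=
  sSup {j | ∀ i ≤ j, completeRAry r i ∈ subtreesList t}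

/-- The distribution of the sum of `m` i.i.d. copies of the offspring distribution:
`probSum p m s = P(S_m = s)`. -/
noncomputable def probSum (p : ℕ → ℝ) : ℕ → ℕ → ℝ
  | 0, s => if s = 0 then 1 else 0
  | m + 1, s => ∑ j ∈ Finset.range (s + 1), p j * probSum p m (s - j)

namespace PTAux

lemma gwProb_node (p : ℕ → ℝ) (ts : List PTree) :
    gwProb p (PTree.node ts) = p ts.length * gwProbList p ts := by rw [gwProb]
lemma gwProbList_nil (p : ℕ → ℝ) : gwProbList p ([] : List PTree) = 1 := by rw [gwProbList]
lemma gwProbList_cons (p : ℕ → ℝ) (t : PTree) (ts : List PTree) :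
    gwProbList p (t :: ts) = gwProb p t * gwProbList p ts := by rw [gwProbList]
lemma size_node (ts : List PTree) : size (PTree.node ts) = 1 + sizeList ts := by rw [size]
lemma sizeList_nil : sizeList ([] : List PTree) = 0 := by rw [sizeList]
lemma sizeList_cons (t : PTree) (ts : List PTree) :
    sizeList (t :: ts) = size t + sizeList ts := by rw [sizeList]
lemma gwProb_leaf (p : ℕ → ℝ) : gwProb p (PTree.node []) = p 0 := by
  rw [gwProb_node, gwProbList_nil]; simp
lemma size_leaf : size (PTree.node []) = 1 := by rw [size_node, sizeList_nil]
lemma size_pos (T : PTree) : 1 ≤ size T := by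
  cases T with | node ts => rw [size_node]; omega

theorem ptree_ind {P : PTree → Prop} {Q : List PTree → Prop}
    (h1 : ∀ ts, Q ts → P (PTree.node ts)) (h2 : Q [])
    (h3 : ∀ t ts, P t → Q ts → Q (t :: ts)) : ∀ T, P T :=
  PTree.rec h1 h2 h3

theorem gwProb_nonneg (p : ℕ → ℝ) (h : ∀ i, 0 ≤ p i) : ∀ T, 0 ≤ gwProb p T := by
  refine ptree_ind (Q := fun ts => 0 ≤ gwProbList p ts) ?_ ?_ ?_
  · intro ts ih; show 0 ≤ gwProb p (PTree.node ts); rw [gwProb_node]; exact mul_nonneg (h _) ih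
  · show (0:ℝ) ≤ gwProbList p []; rw [gwProbList_nil]; norm_num
  · intro t ts iht ihts; show 0 ≤ gwProbList p (t :: ts); rw [gwProbList_cons]; exact mul_nonneg iht ihts

theorem gwProbList_nonneg (p : ℕ → ℝ) (h : ∀ i, 0 ≤ p i) :
    ∀ ts : List PTree, 0 ≤ gwProbList p ts := by
  intro ts; induction ts with
  | nil => rw [gwProbList_nil]; norm_num
  | cons t ts ih => rw [gwProbList_cons]; exact mul_nonneg (gwProb_nonneg p h t) ih

/-- Main lower bound by mutual induction. -/
theorem gwProb_lower (p : ℕ → ℝ) (h : ∀ i, 0 ≤ p i) (hp0 : 0 < p 0) (L : ℝ) (hL : 0 ≤ L)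
    (hkey : ∀ d, 0 < p d → p 0 * L ^ d ≤ p 0 ^ d * p d) :
    ∀ T, 0 < gwProb p T → p 0 * L ^ size T ≤ L * gwProb p T := by
  refine ptree_ind
    (Q := fun ts => 0 < gwProbList p ts →
      p 0 ^ ts.length * L ^ sizeList ts ≤ L ^ ts.length * gwProbList p ts) ?_ ?_ ?_
  · intro ts ih hpos
    revert hpos
    show 0 < gwProb p (PTree.node ts) → p 0 * L ^ size (PTree.node ts) ≤ L * gwProb p (PTree.node ts)
    intro hpos
    rw [gwProb_node] at hpos ⊢
    have hPl : 0 < gwProbList p ts := by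
      rcases mul_pos_iff.1 hpos with ⟨_, h2⟩ | ⟨h1, _⟩
      · exact h2
      · exact absurd h1 (not_lt.2 (h _))
    have hplen : 0 < p ts.length := by
      rcases mul_pos_iff.1 hpos with ⟨h1, _⟩ | ⟨_, h2⟩
      · exact h1
      · exact absurd h2 (not_lt.2 (gwProbList_nonneg p h ts))
    have hB := ih hPl
    have hk := hkey ts.length hplen
    rw [size_node]
    have key : p 0 ^ ts.length * (p 0 * L ^ (1 + sizeList ts))
        ≤ p 0 ^ ts.length * (L * (p ts.length * gwProbList p ts)) := by
      calc p 0 ^ ts.length * (p 0 * L ^ (1 + sizeList ts))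
          = (p 0 * L) * (p 0 ^ ts.length * L ^ sizeList ts) := by rw [pow_add]; ring
        _ ≤ (p 0 * L) * (L ^ ts.length * gwProbList p ts) :=
            mul_le_mul_of_nonneg_left hB (mul_nonneg hp0.le hL)
        _ = (L * gwProbList p ts) * (p 0 * L ^ ts.length) := by ring
        _ ≤ (L * gwProbList p ts) * (p 0 ^ ts.length * p ts.length) :=
            mul_le_mul_of_nonneg_left hk (mul_nonneg hL hPl.le)
        _ = p 0 ^ ts.length * (L * (p ts.length * gwProbList p ts)) := by ring
    exact le_of_mul_le_mul_left key (pow_pos hp0 _)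
  · intro hx
    show p 0 ^ (List.length ([]:List PTree)) * L ^ sizeList [] ≤ L ^ (List.length ([]:List PTree)) * gwProbList p []
    rw [gwProbList_nil, sizeList_nil]; simp
  · intro t ts iht ihts hpos
    revert hpos
    show 0 < gwProbList p (t :: ts) → p 0 ^ (t::ts).length * L ^ sizeList (t::ts) ≤ L ^ (t::ts).length * gwProbList p (t :: ts)
    intro hpos
    rw [gwProbList_cons] at hpos ⊢
    have h1 : 0 < gwProb p t := by
      rcases mul_pos_iff.1 hpos with ⟨a, _⟩ | ⟨_, b⟩
      · exact a
      · exact absurd b (not_lt.2 (gwProbList_nonneg p h ts))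
    have h2 : 0 < gwProbList p ts := by
      rcases mul_pos_iff.1 hpos with ⟨_, a⟩ | ⟨b, _⟩
      · exact a
      · exact absurd b (not_lt.2 (gwProb_nonneg p h t))
    rw [sizeList_cons, List.length_cons]
    calc p 0 ^ (ts.length + 1) * L ^ (size t + sizeList ts)
        = (p 0 * L ^ size t) * (p 0 ^ ts.length * L ^ sizeList ts) := by
          rw [pow_succ, pow_add]; ring
      _ ≤ (L * gwProb p t) * (L ^ ts.length * gwProbList p ts) :=
          mul_le_mul (iht h1) (ihts h2)
            (mul_nonneg (pow_nonneg hp0.le _) (pow_nonneg hL _))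
            (mul_nonneg hL h1.le)
      _ = L ^ (ts.length + 1) * (gwProb p t * gwProbList p ts) := by rw [pow_succ]; ring

end PTAux

namespace PTAux

/-- The chain-of-stars tree. -/
def chainT (i : ℕ) : ℕ → PTree
  | 0 => PTree.node []
  | m + 1 => PTree.node (chainT i m :: List.replicate (i - 1) (PTree.node []))

lemma sizeList_replicate (n : ℕ) : sizeList (List.replicate n (PTree.node [])) = n := by
  induction n with
  | zero => simpa using sizeList_nil
  | succ n ih => rw [List.replicate_succ, sizeList_cons, ih, size_leaf]; omega

lemma gwProbList_replicate (p : ℕ → ℝ) (n : ℕ) :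
    gwProbList p (List.replicate n (PTree.node [])) = p 0 ^ n := by
  induction n with
  | zero => simpa using gwProbList_nil p
  | succ n ih => rw [List.replicate_succ, gwProbList_cons, ih, gwProb_leaf, pow_succ]; ring

lemma size_chainT (i : ℕ) (hi : 1 ≤ i) (m : ℕ) : size (chainT i m) = m * i + 1 := by
  induction m with
  | zero => simpa [chainT] using size_leaf
  | succ m ih =>
      show size (PTree.node (chainT i m :: List.replicate (i - 1) (PTree.node []))) = _
      rw [size_node, sizeList_cons, sizeList_replicate, ih]
      have : (m + 1) * i = m * i + i := by ring
      omega

lemma gwProb_chainT (p : ℕ → ℝ) (i : ℕ) (hi : 1 ≤ i) (m : ℕ) :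
    gwProb p (chainT i m) = p 0 * (p i * p 0 ^ (i - 1)) ^ m := by
  induction m with
  | zero => simpa [chainT] using gwProb_leaf p
  | succ m ih =>
      show gwProb p (PTree.node (chainT i m :: List.replicate (i - 1) (PTree.node []))) = _
      rw [gwProb_node, gwProbList_cons, gwProbList_replicate, ih, List.length_cons,
        List.length_replicate]
      have h1 : i - 1 + 1 = i := by omega
      rw [h1, pow_succ]
      ring

/-- Generic limit computation: `(x * c^(e k))^(1/k) → c^r` when `e k / k → r`. -/
lemma tendsto_aux (x c : ℝ) (hx : 0 < x) (hc : 0 < c) (e : ℕ → ℕ) (r : ℝ)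
    (he : Tendsto (fun k : ℕ => (e k : ℝ) / (k : ℝ)) atTop (𝓝 r)) :
    Tendsto (fun k : ℕ => (x * c ^ e k) ^ (1 / (k : ℝ))) atTop (𝓝 (c ^ r)) := by
  have hexp : Tendsto (fun k : ℕ => Real.log x * (1 / (k : ℝ)) + ((e k : ℝ) / k) * Real.log c)
      atTop (𝓝 (Real.log x * 0 + r * Real.log c)) :=
    (tendsto_const_nhds.mul tendsto_one_div_atTop_nhds_zero_nat).add (he.mul_const _)
  rw [mul_zero, zero_add] at hexp
  have h2 := (Real.continuous_exp.tendsto (r * Real.log c)).comp hexp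
  have heq : c ^ r = Real.exp (r * Real.log c) := by
    rw [Real.rpow_def_of_pos hc, mul_comm]
  rw [heq]
  refine Tendsto.congr' ?_ h2
  filter_upwards [eventually_ge_atTop 1] with k hk
  have hpos : (0:ℝ) < x * c ^ e k := by positivity
  show Real.exp _ = _
  rw [Real.rpow_def_of_pos hpos, Real.log_mul (ne_of_gt hx) (by positivity),
    Real.log_pow]
  ring_nf

/-- `⌊(k-1)/i⌋ / k → 1/i`. -/
lemma tendsto_ediv (i : ℕ) (hi : 1 ≤ i) :
    Tendsto (fun k : ℕ => (((k - 1) / i : ℕ) : ℝ) / (k : ℝ)) atTop (𝓝 (1 / (i : ℝ))) := by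
  have hi0 : (0:ℝ) < (i:ℝ) := by exact_mod_cast hi
  have hlow : Tendsto (fun k : ℕ => 1 / (i:ℝ) - 1 / (k:ℝ)) atTop (𝓝 (1 / (i:ℝ))) := by
    have := tendsto_const_nhds (x := 1 / (i:ℝ)) (f := atTop (α := ℕ))
    simpa using this.sub tendsto_one_div_atTop_nhds_zero_nat
  refine tendsto_of_tendsto_of_tendsto_of_le_of_le' hlow tendsto_const_nhds ?_ ?_
  · filter_upwards [eventually_ge_atTop 1] with k hk
    have hk0 : (0:ℝ) < (k:ℝ) := by exact_mod_cast hk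
    have hnat : k ≤ (k - 1) / i * i + i := by
      have hdm := Nat.div_add_mod (k - 1) i
      have hm : (k - 1) % i < i := Nat.mod_lt _ (by omega)
      calc k = (k - 1) + 1 := by omega
        _ = (i * ((k - 1) / i) + (k - 1) % i) + 1 := by rw [hdm]
        _ = i * ((k - 1) / i) + ((k - 1) % i + 1) := by omega
        _ ≤ i * ((k - 1) / i) + i := Nat.add_le_add_left hm _
        _ = (k - 1) / i * i + i := by rw [Nat.mul_comm]
    have hreal : (k:ℝ) ≤ (((k - 1) / i : ℕ) : ℝ) * i + i := by exact_mod_cast hnat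
    have hnum : (k:ℝ) / i - 1 ≤ (((k - 1) / i : ℕ) : ℝ) := by
      rw [sub_le_iff_le_add, div_le_iff₀ hi0, add_mul, one_mul]
      exact hreal
    have heq : 1 / (i:ℝ) - 1 / (k:ℝ) = ((k:ℝ) / i - 1) / k := by
      field_simp
    rw [heq]
    gcongr
  · filter_upwards [eventually_ge_atTop 1] with k hk
    have hk0 : (0:ℝ) < (k:ℝ) := by exact_mod_cast hk
    have hnat : (k - 1) / i * i ≤ k := le_trans (Nat.div_mul_le_self _ _) (by omega)
    have hreal : (((k - 1) / i : ℕ) : ℝ) * i ≤ (k:ℝ) := by exact_mod_cast hnat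
    rw [div_le_div_iff₀ hk0 hi0, one_mul]
    exact hreal

end PTAux

/-- Theorem 4.9: `(p^min_k)^{1/k} → L` as `k → ∞` along the subsequence where
`π(𝒮_k) > 0`, where `L = inf { p_0 (p_i/p_0)^{1/i} : i ≥ 1, p_i > 0 }`;
consequently `L < 1`. -/

theorem pmin_kth_root_limit
    (p : ℕ → ℝ) (hp : OffspringCond p) :
    let L : ℝ :=
      sInf ((fun i : ℕ => p 0 * (p i / p 0) ^ (1 / (i : ℝ))) '' {i : ℕ | 1 ≤ i ∧ 0 < p i})
    Tendsto (fun k : ℕ => pmin p k ^ (1 / (k : ℝ))) (alongGW p) (𝓝 L) ∧ L < 1 := by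
  obtain ⟨hnn, hsum, hmean, hvar, hvarlt⟩ := hp
  have hple : ∀ i, p i ≤ 1 := fun i => le_hasSum hsum i (fun j _ => hnn j)
  have hex : ∃ i, 1 ≤ i ∧ 0 < p i := by
    by_contra hcon
    push_neg at hcon
    have hz : ∀ i, 1 ≤ i → p i = 0 := fun i hi => le_antisymm (hcon i hi) (hnn i)
    have hfz : (fun i : ℕ => (i:ℝ) * p i) = fun _ => 0 := by
      funext i
      match i with
      | 0 => simp
      | (n+1) => rw [hz (n+1) (by omega)]; ring
    rw [hfz] at hmean
    exact one_ne_zero (hasSum_zero.unique hmean).symm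
  have hp0 : 0 < p 0 := by
    by_contra h0
    have hp00 : p 0 = 0 := le_antisymm (not_lt.1 h0) (hnn 0)
    have hs : HasSum (fun i : ℕ => ((i:ℝ) - 1) * p i) 0 := by
      have h := hmean.sub hsum
      norm_num at h
      convert h using 2 with i
      exacts [rfl, by ring]
    have hnn' : ∀ j : ℕ, 0 ≤ ((j:ℝ) - 1) * p j := by
      intro j
      match j with
      | 0 => rw [hp00]; simp
      | (n+1) =>
          apply mul_nonneg _ (hnn _)
          have : (0:ℝ) ≤ (n:ℝ) := Nat.cast_nonneg n
          push_cast
          linarith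
    have hterm0 : ∀ i : ℕ, ((i:ℝ) - 1) * p i = 0 := fun i =>
      le_antisymm (le_hasSum hs i (fun j _ => hnn' j)) (hnn' i)
    have hz2 : ∀ i, 2 ≤ i → p i = 0 := by
      intro i hi
      have h := hterm0 i
      have hne : ((i:ℝ) - 1) ≠ 0 := by
        have : (2:ℝ) ≤ (i:ℝ) := by exact_mod_cast hi
        intro hc; rw [sub_eq_zero] at hc; rw [hc] at this; linarith
      exact (mul_eq_zero.1 h).resolve_left hne
    have heqf : (fun i : ℕ => (i:ℝ)^2 * p i) = fun i : ℕ => (i:ℝ) * p i := by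
      funext i
      match i with
      | 0 => simp
      | 1 => norm_num
      | (n+2) => rw [hz2 (n+2) (by omega)]; ring
    rw [heqf, hmean.tsum_eq] at hvarlt
    exact lt_irrefl 1 hvarlt
  obtain ⟨i₀, hi₀, hpi₀⟩ := hex
  have hpair : ∀ i, 1 ≤ i → p 0 + p i ≤ 1 := by
    intro i hi
    have h := sum_le_hasSum ({0, i} : Finset ℕ) (fun j _ => hnn j) hsum
    rwa [Finset.sum_pair (by omega : (0:ℕ) ≠ i)] at h
  intro L
  have hLdef : L = sInf ((fun i : ℕ => p 0 * (p i / p 0) ^ (1 / (i : ℝ))) ''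
      {i : ℕ | 1 ≤ i ∧ 0 < p i}) := rfl
  have hSne : ((fun i : ℕ => p 0 * (p i / p 0) ^ (1 / (i : ℝ))) ''
      {i : ℕ | 1 ≤ i ∧ 0 < p i}).Nonempty := ⟨_, ⟨i₀, ⟨hi₀, hpi₀⟩, rfl⟩⟩
  have hSnn : ∀ x ∈ ((fun i : ℕ => p 0 * (p i / p 0) ^ (1 / (i : ℝ))) ''
      {i : ℕ | 1 ≤ i ∧ 0 < p i}), 0 ≤ x := by
    rintro x ⟨i, ⟨hi, hpi⟩, rfl⟩
    exact mul_nonneg hp0.le (Real.rpow_nonneg (div_nonneg (hnn i) hp0.le) _)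
  have hbdd : BddBelow ((fun i : ℕ => p 0 * (p i / p 0) ^ (1 / (i : ℝ))) ''
      {i : ℕ | 1 ≤ i ∧ 0 < p i}) := ⟨0, fun x hx => hSnn x hx⟩
  have hL0 : 0 ≤ L := by rw [hLdef]; exact Real.sInf_nonneg hSnn
  have helem : ∀ i : ℕ, 1 ≤ i → 0 < p i →
      (p 0 * (p i / p 0) ^ (1 / (i:ℝ))) ^ i = p i * p 0 ^ (i-1) := by
    intro i hi hpi
    have hb : (0:ℝ) ≤ p i / p 0 := div_nonneg (hnn i) hp0.le
    have hii : ((i:ℝ)) ≠ 0 := Nat.cast_ne_zero.2 (by omega)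
    have hr : ((p i / p 0) ^ ((1:ℝ)/(i:ℝ))) ^ (i:ℕ) = p i / p 0 := by
      rw [← Real.rpow_natCast ((p i / p 0) ^ ((1:ℝ)/(i:ℝ))) i, ← Real.rpow_mul hb,
        one_div, inv_mul_cancel₀ hii, Real.rpow_one]
    rw [mul_pow, hr]
    have hps : p 0 ^ i = p 0 ^ (i-1) * p 0 := by rw [← pow_succ]; congr 1; omega
    rw [hps]
    field_simp
  have hkey : ∀ d, 0 < p d → p 0 * L ^ d ≤ p 0 ^ d * p d := by
    intro d hpd
    match d with
    | 0 => simp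
    | (n+1) =>
      have hmem : p 0 * (p (n+1) / p 0) ^ (1 / ((n+1:ℕ):ℝ)) ∈
          ((fun i : ℕ => p 0 * (p i / p 0) ^ (1 / (i : ℝ))) '' {i : ℕ | 1 ≤ i ∧ 0 < p i}) :=
        ⟨n+1, ⟨by omega, hpd⟩, rfl⟩
      have hLa : L ≤ p 0 * (p (n+1) / p 0) ^ (1 / ((n+1:ℕ):ℝ)) := by
        rw [hLdef]; exact csInf_le hbdd hmem
      have h1 : L ^ (n+1) ≤ (p 0 * (p (n+1) / p 0) ^ (1 / ((n+1:ℕ):ℝ))) ^ (n+1) :=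
        pow_le_pow_left₀ hL0 hLa (n+1)
      have h2 := helem (n+1) (by omega) hpd
      calc p 0 * L ^ (n+1) ≤ p 0 * (p (n+1) * p 0 ^ (n+1-1)) := by
            rw [← h2]; exact mul_le_mul_of_nonneg_left h1 hp0.le
        _ = p 0 ^ (n+1) * p (n+1) := by
            have : p 0 ^ (n+1) = p 0 * p 0 ^ (n+1-1) := by
              rw [show n+1-1 = n from rfl, pow_succ]; ring
            rw [this]; ring
  have ha0lt1 : p 0 * (p i₀ / p 0) ^ (1/(i₀:ℝ)) < 1 := by
    have hai := helem i₀ hi₀ hpi₀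
    have hlt : (p 0 * (p i₀ / p 0) ^ (1/(i₀:ℝ))) ^ i₀ < 1 := by
      rw [hai]
      have h1 : p 0 ^ (i₀-1) ≤ 1 := pow_le_one₀ hp0.le (hple 0)
      have h2 : p i₀ < 1 := by have := hpair i₀ hi₀; linarith
      calc p i₀ * p 0 ^ (i₀-1) ≤ p i₀ * 1 := mul_le_mul_of_nonneg_left h1 (hnn i₀)
        _ < 1 := by rw [mul_one]; exact h2
    by_contra hge
    push_neg at hge
    have hone : (1:ℝ) ≤ (p 0 * (p i₀ / p 0) ^ (1/(i₀:ℝ))) ^ i₀ := by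
      calc (1:ℝ) = 1 ^ i₀ := (one_pow i₀).symm
        _ ≤ _ := pow_le_pow_left₀ (by norm_num) hge i₀
    linarith
  have hL1 : L < 1 :=
    lt_of_le_of_lt (by rw [hLdef]; exact csInf_le hbdd ⟨i₀, ⟨hi₀, hpi₀⟩, rfl⟩) ha0lt1
  have hTplus_leaf : ∀ k, 1 ≤ k → PTree.node [] ∈ TPlus p k := by
    intro k hk
    simp only [TPlus, Set.mem_setOf_eq]
    exact ⟨by rw [PTAux.size_leaf]; omega, by rw [PTAux.gwProb_leaf]; exact hp0⟩
  have hpmin_nonneg : ∀ k, 0 ≤ pmin p k := fun k =>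
    Real.sInf_nonneg (by rintro x ⟨T, hT, rfl⟩; exact PTAux.gwProb_nonneg p hnn T)
  have hbddim : ∀ k, BddBelow (gwProb p '' TPlus p k) := fun k =>
    ⟨0, by rintro x ⟨T, hT, rfl⟩; exact PTAux.gwProb_nonneg p hnn T⟩
  have hpmin_le : ∀ k, ∀ T, T ∈ TPlus p k → pmin p k ≤ gwProb p T := fun k T hT =>
    csInf_le (hbddim k) ⟨T, hT, rfl⟩
  have hlow : ∀ k, 2 ≤ k → p 0 * L ^ (k-1) ≤ pmin p k := by
    intro k hk
    refine le_csInf ⟨gwProb p (PTree.node []),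
      Set.mem_image_of_mem _ (hTplus_leaf k (by omega))⟩ ?_
    rintro x ⟨T, ⟨hTs, hTp⟩, rfl⟩
    rcases hL0.eq_or_lt with hLz|hLp
    · rw [← hLz, zero_pow (by omega : k-1 ≠ 0), mul_zero]
      exact PTAux.gwProb_nonneg p hnn T
    · have hmain := PTAux.gwProb_lower p hnn hp0 L hL0 hkey T hTp
      have hs1 : 1 ≤ size T := PTAux.size_pos T
      have hss : size T = (size T - 1) + 1 := by omega
      rw [hss, pow_succ] at hmain
      have h3 : (p 0 * L ^ (size T - 1)) * L ≤ gwProb p T * L := by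
        calc (p 0 * L ^ (size T - 1)) * L = p 0 * (L ^ (size T - 1) * L) := by ring
          _ ≤ L * gwProb p T := hmain
          _ = gwProb p T * L := by ring
      have h4 : p 0 * L ^ (size T - 1) ≤ gwProb p T := le_of_mul_le_mul_right h3 hLp
      calc p 0 * L ^ (k-1) ≤ p 0 * L ^ (size T - 1) :=
            mul_le_mul_of_nonneg_left
              (pow_le_pow_of_le_one hL0 hL1.le (by omega)) hp0.le
        _ ≤ gwProb p T := h4
  have hmainT : Tendsto (fun k : ℕ => pmin p k ^ (1/(k:ℝ))) atTop (𝓝 L) := by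
    rw [tendsto_order]
    constructor
    · intro a ha
      rcases hL0.eq_or_lt with hLz|hLp
      · filter_upwards with k
        exact lt_of_lt_of_le (by rw [← hLz] at ha; exact ha)
          (Real.rpow_nonneg (hpmin_nonneg k) _)
      · have he1 : Tendsto (fun k : ℕ => (((k-1) : ℕ):ℝ)/(k:ℝ)) atTop (𝓝 (1/(1:ℝ))) := by
          have h := PTAux.tendsto_ediv 1 le_rfl
          simpa [Nat.div_one] using h
        norm_num at he1
        have hlo := PTAux.tendsto_aux (p 0) L hp0 hLp (fun k => k-1) 1 he1
        rw [Real.rpow_one] at hlo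
        have hev1 := (tendsto_order.1 hlo).1 a ha
        filter_upwards [hev1, eventually_ge_atTop 2] with k h1 h2
        refine lt_of_lt_of_le h1 ?_
        exact Real.rpow_le_rpow (mul_nonneg hp0.le (pow_nonneg hL0 _)) (hlow k h2)
          (by positivity)
    · intro b hb
      have hlt : sInf ((fun i : ℕ => p 0 * (p i / p 0) ^ (1 / (i : ℝ))) ''
          {i : ℕ | 1 ≤ i ∧ 0 < p i}) < b := by rw [← hLdef]; exact hb
      obtain ⟨x, hxS, hxb⟩ := exists_lt_of_csInf_lt hSne hlt
      obtain ⟨i, ⟨hi, hpi⟩, rfl⟩ := hxS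
      have hcpos : 0 < p i * p 0 ^ (i-1) := mul_pos hpi (pow_pos hp0 _)
      have hup := PTAux.tendsto_aux (p 0) (p i * p 0 ^ (i-1)) hp0 hcpos
        (fun k => (k-1)/i) (1/(i:ℝ)) (PTAux.tendsto_ediv i hi)
      have hapos : 0 < p 0 * (p i / p 0) ^ (1/(i:ℝ)) :=
        mul_pos hp0 (Real.rpow_pos_of_pos (div_pos hpi hp0) _)
      have haeq : (p i * p 0 ^ (i-1)) ^ ((1:ℝ)/(i:ℝ)) = p 0 * (p i / p 0) ^ (1/(i:ℝ)) := by
        rw [← helem i hi hpi,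
          ← Real.rpow_natCast (p 0 * (p i / p 0) ^ (1/(i:ℝ))) i,
          ← Real.rpow_mul hapos.le, mul_one_div,
          div_self (Nat.cast_ne_zero.2 (by omega : i ≠ 0)), Real.rpow_one]
      rw [haeq] at hup
      have hev1 := (tendsto_order.1 hup).2 b hxb
      filter_upwards [hev1, eventually_ge_atTop 1] with k h1 h2
      refine lt_of_le_of_lt ?_ h1
      have hmem : PTAux.chainT i ((k-1)/i) ∈ TPlus p k := by
        simp only [TPlus, Set.mem_setOf_eq]
        constructor
        · rw [PTAux.size_chainT i hi]
          have := Nat.div_mul_le_self (k-1) i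
          omega
        · rw [PTAux.gwProb_chainT p i hi]
          exact mul_pos hp0 (pow_pos hcpos _)
      have hple2 := hpmin_le k _ hmem
      rw [PTAux.gwProb_chainT p i hi] at hple2
      exact Real.rpow_le_rpow (hpmin_nonneg k) hple2 (by positivity)
  have hle : alongGW p ≤ atTop := by unfold alongGW; exact inf_le_left
  exact ⟨hmainT.mono_left hle, hL1⟩
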